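/- Let v > 0 be a natural number and B a finite mixed radix base with weights ⟨w₀,…,w_k⟩ (k = |B|). Then for every index 0 ≤ i ≤ k with v ≥ wᵢ, there exists an index j with i ≤ j ≤ k such that the j-th digit of v in base B is strictly positive. -/
import Mathlib


/-- The weight of digit position `i` in mixed radix base `B`: product of the first `i` radices. -/
def weight (B : List ℕ) (i : ℕ) : ℕ := (B.take i).prod

/-- The `i`-th digit of `v` in mixed radix base `B` (the most significant digit, at
position `B.length`, is `v / B.prod` and is unbounded). -/
def digit (B : List ℕ) (v i : ℕ) : ℕ :=
  if i < B.length then (v / weight B i) % B.getD i 1 else v / B.prod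

/-- The sum of the digits of `v` in base `B`. -/
def digitSum (B : List ℕ) (v : ℕ) : ℕ :=
  ∑ i ∈ Finset.range (B.length + 1), digit B v i

/-- The sum of digits of all elements of the multiset `S` in base `B`. -/
def sumDigits (S : Multiset ℕ) (B : List ℕ) : ℕ :=
  (S.map (digitSum B)).sum

theorem stmt10 (v : ℕ) (hv : 0 < v) (B : List ℕ) (hB : ∀ x ∈ B, 2 ≤ x)
    (i : ℕ) (hi : i ≤ B.length) (hw : weight B i ≤ v) :
    ∃ j, i ≤ j ∧ j ≤ B.length ∧ 0 < digit B v j := by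
  have hwpos : ∀ m, 0 < weight B m := by
    intro m
    refine List.prod_pos ?_
    intro x hx
    exact lt_of_lt_of_le (by norm_num) (hB x (List.mem_of_mem_take hx))
  set P : ℕ → Prop := fun j => weight B j ≤ v with hP
  set j := Nat.findGreatest P B.length with hj
  have hij : i ≤ j := Nat.le_findGreatest hi hw
  have hjle : j ≤ B.length := Nat.findGreatest_le _
  have hPj : P j := Nat.findGreatest_spec hi hw
  refine ⟨j, hij, hjle, ?_⟩
  rcases eq_or_lt_of_le hjle with heq | hlt
  · have : ¬ (B.length < B.length) := lt_irrefl _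
    rw [digit, heq, if_neg this]
    have : weight B B.length = B.prod := by simp [weight]
    rw [← heq] at this
    have hvp : B.prod ≤ v := this ▸ hPj
    exact Nat.div_pos hvp (this ▸ hwpos j)
  · have hmax : ¬ P (j + 1) := Nat.findGreatest_is_greatest (Nat.lt_succ_self j) hlt
    have hsucc : weight B (j + 1) = weight B j * B.get ⟨j, hlt⟩ := by
      simp [weight, List.prod_take_succ B j hlt]
    have hlt2 : v < weight B j * B.get ⟨j, hlt⟩ := by
      rw [← hsucc]; exact lt_of_not_ge hmax
    have hdiv_lt : v / weight B j < B.get ⟨j, hlt⟩ :=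
      Nat.div_lt_of_lt_mul hlt2
    have hdiv_pos : 0 < v / weight B j := Nat.div_pos hPj (hwpos j)
    rw [digit, if_pos hlt]
    have hgetD : B.getD j 1 = B.get ⟨j, hlt⟩ := by
      simp [List.getD_eq_getElem?_getD, List.getElem?_eq_getElem hlt]
    rw [hgetD, Nat.mod_eq_of_lt hdiv_lt]
    exact hdiv_pos
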